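/- Let a and b be integers with 0 < a < b and gcd(a, b) = 1. Then there exists a complex number ξ with |ξ| = 1 and 1 + ξ^a + ξ^b = 0 if and only if a and b are, in some order, congruent to 1 and 2 modulo 3 (i.e. either a ≡ 1 and b ≡ 2 (mod 3), or a ≡ 2 and b ≡ 1 (mod 3)). -/

import Mathlib

private lemma pow_mod3 (ξ : ℂ) (h : ξ ^ 3 = 1) (n : ℕ) : ξ ^ n = ξ ^ (n % 3) := by
  conv_lhs => rw [← Nat.div_add_mod n 3]
  rw [pow_add, pow_mul, h, one_pow, one_mul]

/- STATEMENT 5: For coprime integers `0 < a < b`, there is a complex number `ξ` of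
modulus 1 with `1 + ξ^a + ξ^b = 0` iff `a` and `b` are, in some order, congruent to
`1` and `2` modulo `3`. -/
theorem stmt_5 (a b : ℕ) (ha : 0 < a) (hab : a < b) (hgcd : Nat.gcd a b = 1) :
    (∃ ξ : ℂ, ‖ξ‖ = 1 ∧ 1 + ξ ^ a + ξ ^ b = 0) ↔
      ((a % 3 = 1 ∧ b % 3 = 2) ∨ (a % 3 = 2 ∧ b % 3 = 1)) := by
  constructor
  · rintro ⟨ξ, habs, h⟩
    set u := ξ ^ a with hu
    set v := ξ ^ b with hv
    have hξ0 : ξ ≠ 0 := by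
      intro h0; rw [h0] at habs; simp at habs
    -- conjugate facts
    have hcu : u * (starRingEnd ℂ) u = 1 := by
      rw [Complex.mul_conj]
      norm_cast
      rw [Complex.normSq_eq_norm_sq, hu, norm_pow, habs]
      norm_num
    have hcv : v * (starRingEnd ℂ) v = 1 := by
      rw [Complex.mul_conj]
      norm_cast
      rw [Complex.normSq_eq_norm_sq, hv, norm_pow, habs]
      norm_num
    have hc : 1 + (starRingEnd ℂ) u + (starRingEnd ℂ) v = 0 := by
      have := congrArg (starRingEnd ℂ) h
      simpa using this
    have huv : u * v = 1 := by
      linear_combination u * v * hc - v * hcu - u * hcv - h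
    have hu2 : u ^ 2 + u + 1 = 0 := by linear_combination u * h - huv
    have hv2 : v ^ 2 + v + 1 = 0 := by linear_combination v * h - huv
    -- ξ ^ (3a) = 1 and ξ ^ (3b) = 1
    have h3a : ξ ^ ((3 : ℤ) * a) = 1 := by
      have : u ^ 3 = 1 := by linear_combination (u - 1) * hu2
      rw [hu, ← pow_mul] at this
      rw [show (3 : ℤ) * a = ((3 * a : ℕ) : ℤ) by push_cast; ring, zpow_natCast,
        show 3 * a = a * 3 by ring, this]
    have h3b : ξ ^ ((3 : ℤ) * b) = 1 := by
      have : v ^ 3 = 1 := by linear_combination (v - 1) * hv2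
      rw [hv, ← pow_mul] at this
      rw [show (3 : ℤ) * b = ((3 * b : ℕ) : ℤ) by push_cast; ring, zpow_natCast,
        show 3 * b = b * 3 by ring, this]
    have hbez : (1 : ℤ) = a * Nat.gcdA a b + b * Nat.gcdB a b := by
      have := Nat.gcd_eq_gcd_ab a b
      rw [hgcd] at this; exact_mod_cast this
    have h3 : ξ ^ (3 : ℕ) = 1 := by
      have : ξ ^ ((3 : ℤ)) = 1 := by
        have h3' : (3 : ℤ) = (3 * a) * Nat.gcdA a b + (3 * b) * Nat.gcdB a b := by
          linarith [hbez]
        rw [h3', zpow_add₀ hξ0, zpow_mul ξ (3 * (a:ℤ)) (Nat.gcdA a b),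
          zpow_mul ξ (3 * (b:ℤ)) (Nat.gcdB a b), h3a, h3b, one_zpow, one_zpow, one_mul]
      exact_mod_cast this
    have hma : ξ ^ a = ξ ^ (a % 3) := pow_mod3 ξ h3 a
    have hmb : ξ ^ b = ξ ^ (b % 3) := pow_mod3 ξ h3 b
    have ha3 : a % 3 = 0 ∨ a % 3 = 1 ∨ a % 3 = 2 := by omega
    have hb3 : b % 3 = 0 ∨ b % 3 = 1 ∨ b % 3 = 2 := by omega
    rcases ha3 with h1 | h1 | h1 <;> rcases hb3 with h2 | h2 | h2
    -- contradiction: a % 3 = 0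
    · exfalso; rw [hu, hma, h1, pow_zero] at hu2; norm_num at hu2
    · exfalso; rw [hu, hma, h1, pow_zero] at hu2; norm_num at hu2
    · exfalso; rw [hu, hma, h1, pow_zero] at hu2; norm_num at hu2
    · exfalso; rw [hv, hmb, h2, pow_zero] at hv2; norm_num at hv2
    -- both ≡ 1
    · exfalso
      have heq : u = v := by rw [hu, hv, hma, hmb, h1, h2]
      have hval : u = -1/2 := by
        rw [← heq] at h; linear_combination h / 2
      rw [hval] at hu2; norm_num at hu2
    · exact Or.inl ⟨h1, h2⟩
    · exfalso; rw [hv, hmb, h2, pow_zero] at hv2; norm_num at hv2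
    · exact Or.inr ⟨h1, h2⟩
    · exfalso
      have heq : u = v := by rw [hu, hv, hma, hmb, h1, h2]
      have hval : u = -1/2 := by
        rw [← heq] at h; linear_combination h / 2
      rw [hval] at hu2; norm_num at hu2
  · intro hmod
    set s := Real.sqrt 3 with hsdef
    have hs : (s : ℂ) ^ 2 = 3 := by
      norm_cast
      exact_mod_cast Real.sq_sqrt (by norm_num : (3:ℝ) ≥ 0)
    refine ⟨(-1 + s * Complex.I) / 2, ?_, ?_⟩
    · rw [norm_div, Complex.norm_def, Complex.normSq_apply]
      have hs' : s ^ 2 = 3 := Real.sq_sqrt (by norm_num)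
      simp [Complex.add_re, Complex.add_im, Complex.mul_re, Complex.mul_im]
      rw [show (1:ℝ) + s * s = 4 by nlinarith]
      rw [show (4:ℝ) = 2^2 by norm_num, Real.sqrt_sq (by norm_num)]
      norm_num
    · set ξ : ℂ := (-1 + s * Complex.I) / 2 with hξ
      have h2 : ξ ^ 2 + ξ + 1 = 0 := by
        rw [hξ]
        field_simp
        linear_combination Complex.I ^ 2 * hs + 3 * Complex.I_sq
      have h3 : ξ ^ 3 = 1 := by linear_combination (ξ - 1) * h2
      rw [pow_mod3 ξ h3 a, pow_mod3 ξ h3 b]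
      rcases hmod with ⟨h1', h2'⟩ | ⟨h1', h2'⟩ <;> rw [h1', h2'] <;>
        [linear_combination h2; linear_combination h2]
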